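/- Necessity of the domain-pivot condition (witness for the 'only if' direction of Proposition 4, XOR construction): Let d, d' ∈ {0,1} with d ≠ d', and let E and E' be independent random variables, each uniformly distributed on {0,1}, on some probability space. For each domain value D ∈ {0,1} define, in model 1: Z₁(D) := (D + E) mod 2 if D = d' and Z₁(D) := (D + E') mod 2 if D = d, and Y₁(D) := (Z₁(D) + E) mod 2; and in model 2: Z₂(D) := (D + E) mod 2 and Y₂(D) := (Z₂(D) + E) mod 2. Then: (a) the joint laws of (Z₁(d'), Y₁(d')) and of (Z₂(d'), Y₂(d')) coincide (in both models, at D=d', the pivot variable is uniform on {0,1} and the outcome equals d' almost surely); (b) the laws of Z₁(d) and Z₂(d) coincide (both uniform on {0,1}); but (c) E[Y₁(d)] = 1/2 while Y₂(d) = d almost surely, so E[Y₂(d)] = d ≠ 1/2. Hence two models can agree on the full source-domain law of (Z, Y) and on the target-domain law of Z while disagreeing on the target-domain expectation of Y, witnessing that without the conditional independence Y ⫫ D | X, Z the target quantity E[Y | X, do(D=d)] is not identifiable from {P(X, Y, Z | do(D=d')), P(X, Z | do(D=d))}. -/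

import Mathlib

open MeasureTheory ProbabilityTheory

/-- **Necessity of the domain-pivot condition** (witness for the 'only if'
direction of Proposition 4, XOR construction).

`d, d' : Bool` with `d ≠ d'` are the two domain values, and `E, E'` are
independent fair-coin random variables on `(Ω, P)`.  Model 1 sets
`Z₁(D) = xor D E` if `D = d'` and `Z₁(D) = xor D E'` if `D ≠ d'` (i.e. `D = d`),
with `Y₁(D) = xor (Z₁ D) E`; model 2 sets `Z₂(D) = xor D E` and
`Y₂(D) = xor (Z₂ D) E`.  Then:
(a) the joint laws of `(Z₁(d'), Y₁(d'))` and `(Z₂(d'), Y₂(d'))` coincide;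
(b) the laws of `Z₁(d)` and `Z₂(d)` coincide; but
(c) `E[Y₁(d)] = 1/2` while `Y₂(d) = d` everywhere, and `𝟙{d = 1} ≠ 1/2`.

Hence `E[Y | X, do(D = d)]` is not identifiable from
`{P(X, Y, Z | do(D = d')), P(X, Z | do(D = d))}` without the conditional
independence `Y ⫫ D | X, Z`. -/
theorem domain_pivot_necessity_xor_witness
    {Ω : Type*} [MeasurableSpace Ω] (P : Measure Ω) [IsProbabilityMeasure P]
    (d d' : Bool) (hdd' : d ≠ d')
    (E E' : Ω → Bool) (hE : Measurable E) (hE' : Measurable E')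
    (hEunif : P (E ⁻¹' {true}) = 1 / 2) (hE'unif : P (E' ⁻¹' {true}) = 1 / 2)
    (hindep : IndepFun E E' P)
    (Z1 Y1 Z2 Y2 : Bool → Ω → Bool)
    (hZ1 : ∀ (D : Bool) (ω : Ω),
      Z1 D ω = if D = d' then xor D (E ω) else xor D (E' ω))
    (hY1 : ∀ (D : Bool) (ω : Ω), Y1 D ω = xor (Z1 D ω) (E ω))
    (hZ2 : ∀ (D : Bool) (ω : Ω), Z2 D ω = xor D (E ω))
    (hY2 : ∀ (D : Bool) (ω : Ω), Y2 D ω = xor (Z2 D ω) (E ω)) :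
    (P.map (fun ω => (Z1 d' ω, Y1 d' ω)) = P.map (fun ω => (Z2 d' ω, Y2 d' ω))) ∧
    (P.map (Z1 d) = P.map (Z2 d)) ∧
    (∫ ω, (if Y1 d ω then (1 : ℝ) else 0) ∂P = 1 / 2) ∧
    (∀ ω : Ω, Y2 d ω = d) ∧
    ((if d = true then (1 : ℝ) else 0) ≠ 1 / 2) := by

  -- basic measurability and half-mass facts
  have hEfalse : P (E ⁻¹' {false}) = 1 / 2 := by
    have hc : E ⁻¹' {false} = (E ⁻¹' {true})ᶜ := by
      ext ω; simp [Bool.not_eq_true]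
    rw [hc, measure_compl (hE (measurableSet_singleton true)) (measure_ne_top P _),
      hEunif, measure_univ]
    norm_num
  have hE'false : P (E' ⁻¹' {false}) = 1 / 2 := by
    have hc : E' ⁻¹' {false} = (E' ⁻¹' {true})ᶜ := by
      ext ω; simp [Bool.not_eq_true]
    rw [hc, measure_compl (hE' (measurableSet_singleton true)) (measure_ne_top P _),
      hE'unif, measure_univ]
    norm_num
  have hEall : ∀ b : Bool, P (E ⁻¹' {b}) = 1 / 2 := by
    intro b; cases b
    · exact hEfalse
    · exact hEunif
  have hE'all : ∀ b : Bool, P (E' ⁻¹' {b}) = 1 / 2 := by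
    intro b; cases b
    · exact hE'false
    · exact hE'unif
  refine ⟨?_, ?_, ?_, ?_, ?_⟩
  · -- (a): the two maps agree because the random vectors are literally equal
    congr 1
    funext ω
    simp [hZ1, hY1, hZ2, hY2]
  · -- (b): both marginals of Z at d are uniform
    have hZ1d : Z1 d = fun ω => xor d (E' ω) := by
      funext ω; rw [hZ1]; simp [hdd']
    have hZ2d : Z2 d = fun ω => xor d (E ω) := by
      funext ω; rw [hZ2]
    have hm1 : Measurable fun ω => xor d (E' ω) :=
      (measurable_from_top (f := fun b => xor d b)).comp hE'
    have hm2 : Measurable fun ω => xor d (E ω) :=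
      (measurable_from_top (f := fun b => xor d b)).comp hE
    rw [hZ1d, hZ2d]
    apply MeasureTheory.Measure.ext_of_singleton
    intro a
    rw [Measure.map_apply hm1 (measurableSet_singleton a),
      Measure.map_apply hm2 (measurableSet_singleton a)]
    have h1 : (fun ω => xor d (E' ω)) ⁻¹' {a} = E' ⁻¹' {xor d a} := by
      ext ω; cases d <;> cases a <;> simp [Bool.xor_comm]
    have h2 : (fun ω => xor d (E ω)) ⁻¹' {a} = E ⁻¹' {xor d a} := by
      ext ω; cases d <;> cases a <;> simp [Bool.xor_comm]
    rw [h1, h2, hE'all, hEall]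
  · -- (c): E[Y1 d] = 1/2
    have hY1d : ∀ ω, Y1 d ω = xor (xor d (E' ω)) (E ω) := by
      intro ω; rw [hY1, hZ1]; simp [hdd']
    have hset : {ω | Y1 d ω = true}
        = (E ⁻¹' {true} ∩ E' ⁻¹' {xor d false}) ∪ (E ⁻¹' {false} ∩ E' ⁻¹' {xor d true}) := by
      ext ω
      simp only [Set.mem_setOf_eq, hY1d, Set.mem_union, Set.mem_inter_iff,
        Set.mem_preimage, Set.mem_singleton_iff]
      cases d <;> cases hE2 : E ω <;> cases hE'2 : E' ω <;> simp
    have hdisj : Disjoint (E ⁻¹' {true} ∩ E' ⁻¹' {xor d false})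
        (E ⁻¹' {false} ∩ E' ⁻¹' {xor d true}) := by
      apply Set.disjoint_left.mpr
      rintro ω ⟨h1, -⟩ ⟨h2, -⟩
      simp only [Set.mem_preimage, Set.mem_singleton_iff] at h1 h2
      rw [h1] at h2; exact Bool.noConfusion h2
    have hmeas2 : MeasurableSet (E ⁻¹' {false} ∩ E' ⁻¹' {xor d true}) :=
      (hE (measurableSet_singleton _)).inter (hE' (measurableSet_singleton _))
    have hPset : P {ω | Y1 d ω = true} = 1 / 2 := by
      rw [hset, measure_union hdisj hmeas2,
        hindep.measure_inter_preimage_eq_mul _ _ (measurableSet_singleton _)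
          (measurableSet_singleton _),
        hindep.measure_inter_preimage_eq_mul _ _ (measurableSet_singleton _)
          (measurableSet_singleton _),
        hEall, hEall, hE'all, hE'all, mul_one_div, ENNReal.add_halves]
    have hmeasS : MeasurableSet {ω | Y1 d ω = true} := by
      rw [hset]
      exact ((hE (measurableSet_singleton _)).inter (hE' (measurableSet_singleton _))).union
        hmeas2
    have hfun : (fun ω => if Y1 d ω then (1 : ℝ) else 0)
        = Set.indicator {ω | Y1 d ω = true} (fun _ => (1 : ℝ)) := by
      funext ω
      by_cases h : Y1 d ω = true
      · simp [h, Set.indicator_of_mem, Set.mem_setOf_eq]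
      · simp only [Bool.not_eq_true] at h
        simp [h, Set.indicator_of_notMem, Set.mem_setOf_eq]
    rw [hfun, integral_indicator_const _ hmeasS, measureReal_def, hPset]
    norm_num
  · -- Y2 d = d everywhere
    intro ω
    rw [hY2, hZ2, Bool.xor_assoc]
    simp
  · -- indicator of d is not 1/2
    cases d <;> norm_num
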